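/- arXiv:0903.4501 — 5 statements merged into one kernel-verified Lean document; each statement's English description precedes it below -/
import Mathlib

section
/- Let n ≥ 1 and let φ: 𝔽₂[t₁,…,t_n] → 𝔽₂[t₁,…,t_n] be the ring homomorphism with φ(tᵢ)=tᵢ+tᵢ². For 1 ≤ m ≤ n, the homogeneous component of polynomial degree m+1 of φ(e_m) equals e₁·e_m + (m+1)·e_{m+1}, where e_k denotes the k-th elementary symmetric polynomial in t₁,…,t_n (with e_k := 0 for k > n) and (m+1) is reduced mod 2. -/
open MvPolynomial Finset

private lemma key_hom {n : ℕ} (S : Finset (Fin n)) :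
    homogeneousComponent (S.card + 1)
      (∏ i ∈ S, (X i + (X i) ^ 2 : MvPolynomial (Fin n) (ZMod 2))) =
    ∑ j ∈ S, X j * ∏ i ∈ S, X i := by
  classical
  have hcomm : (∏ i ∈ S, (X i + (X i) ^ 2 : MvPolynomial (Fin n) (ZMod 2)))
      = ∏ i ∈ S, ((X i) ^ 2 + X i) := Finset.prod_congr rfl (fun i _ => add_comm _ _)
  rw [hcomm, Finset.prod_add, map_sum]
  have hterm : ∀ T ∈ S.powerset,
      homogeneousComponent (S.card + 1)
        ((∏ i ∈ T, (X i) ^ 2) * ∏ i ∈ S \ T, (X i : MvPolynomial (Fin n) (ZMod 2)))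
      = if T.card = 1 then (∏ i ∈ T, (X i) ^ 2) * ∏ i ∈ S \ T, X i else 0 := by
    intro T hT
    rw [Finset.mem_powerset] at hT
    have hcard : (S \ T).card + T.card = S.card := Finset.card_sdiff_add_card_eq_card hT
    have h1 : ((∏ i ∈ T, (X i) ^ 2 : MvPolynomial (Fin n) (ZMod 2))).IsHomogeneous
        (∑ _i ∈ T, 2) :=
      IsHomogeneous.prod T _ _ (fun i _ => isHomogeneous_X_pow i 2)
    have h2 : ((∏ i ∈ S \ T, (X i) : MvPolynomial (Fin n) (ZMod 2))).IsHomogeneous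
        (∑ _i ∈ S \ T, 1) :=
      IsHomogeneous.prod _ _ _ (fun i _ => isHomogeneous_X _ i)
    have h3 := h1.mul h2
    rw [homogeneousComponent_of_mem ((mem_homogeneousSubmodule _ _).mpr h3)]
    have hs1 : (∑ _i ∈ T, 2) = 2 * T.card := by
      rw [Finset.sum_const, smul_eq_mul, mul_comm]
    have hs2 : (∑ _i ∈ S \ T, 1) = (S \ T).card := by
      rw [Finset.sum_const, smul_eq_mul, mul_one]
    refine if_congr ?_ rfl rfl
    rw [hs1, hs2]
    omega
  rw [Finset.sum_congr rfl hterm, ← Finset.sum_filter, ← Finset.powersetCard_eq_filter,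
    Finset.powersetCard_one, Finset.sum_map]
  refine Finset.sum_congr rfl fun j hj => ?_
  simp only [Function.Embedding.coeFn_mk, Finset.prod_singleton,
    Finset.sdiff_singleton_eq_erase]
  rw [pow_two, mul_assoc, Finset.mul_prod_erase S _ hj]

/-- Mod 2 Wu formula Sq²c_m = c₁c_m + (m+1)c_{m+1} as an identity of symmetric
polynomials via the total Steenrod square φ(tᵢ) = tᵢ + tᵢ². -/
theorem stmt_3 (n : ℕ) (hn : 1 ≤ n) (m : ℕ) (hm1 : 1 ≤ m) (hmn : m ≤ n) :
    homogeneousComponent (m + 1)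
      (aeval (fun i => X i + (X i) ^ 2) (esymm (Fin n) (ZMod 2) m)) =
    esymm (Fin n) (ZMod 2) 1 * esymm (Fin n) (ZMod 2) m
      + C ((m + 1 : ℕ) : ZMod 2) * esymm (Fin n) (ZMod 2) (m + 1) := by
  classical
  have hL : homogeneousComponent (m + 1)
        (aeval (fun i => X i + (X i) ^ 2) (esymm (Fin n) (ZMod 2) m))
      = ∑ S ∈ powersetCard m (univ : Finset (Fin n)), ∑ j ∈ S,
          (X j * ∏ i ∈ S, X i : MvPolynomial (Fin n) (ZMod 2)) := by
    simp only [esymm, map_sum, map_prod, aeval_X]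
    refine Finset.sum_congr rfl fun S hS => ?_
    have h := key_hom S
    rwa [(Finset.mem_powersetCard.mp hS).2] at h
  have hA : (∑ S ∈ powersetCard m (univ : Finset (Fin n)), ∑ j ∈ univ \ S,
        (X j * ∏ i ∈ S, X i : MvPolynomial (Fin n) (ZMod 2)))
      = C ((m + 1 : ℕ) : ZMod 2) * esymm (Fin n) (ZMod 2) (m + 1) := by
    rw [esymm, Finset.mul_sum]
    have hconst : ∀ U ∈ powersetCard (m + 1) (univ : Finset (Fin n)),
        (C ((m + 1 : ℕ) : ZMod 2) * ∏ i ∈ U, X i : MvPolynomial (Fin n) (ZMod 2))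
        = ∑ _j ∈ U, ∏ i ∈ U, X i := by
      intro U hU
      rw [Finset.sum_const, (Finset.mem_powersetCard.mp hU).2, C_eq_coe_nat, nsmul_eq_mul]
    rw [Finset.sum_congr rfl hconst, Finset.sum_sigma', Finset.sum_sigma']
    refine Finset.sum_nbij' (fun x => ⟨insert x.2 x.1, x.2⟩)
      (fun y => ⟨y.1.erase y.2, y.2⟩) ?_ ?_ ?_ ?_ ?_
    · rintro ⟨S, j⟩ hx
      rw [Finset.mem_sigma] at hx ⊢
      obtain ⟨hS, hj⟩ := hx
      rw [Finset.mem_powersetCard] at hS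
      rw [Finset.mem_sdiff] at hj
      refine ⟨Finset.mem_powersetCard.mpr ⟨Finset.subset_univ _, ?_⟩, Finset.mem_insert_self _ _⟩
      rw [Finset.card_insert_of_notMem hj.2, hS.2]
    · rintro ⟨U, j⟩ hy
      rw [Finset.mem_sigma] at hy ⊢
      obtain ⟨hU, hj⟩ := hy
      rw [Finset.mem_powersetCard] at hU
      refine ⟨Finset.mem_powersetCard.mpr ⟨Finset.subset_univ _, ?_⟩, ?_⟩
      · rw [Finset.card_erase_of_mem hj, hU.2]
        omega
      · rw [Finset.mem_sdiff]
        exact ⟨Finset.mem_univ _, Finset.notMem_erase _ _⟩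
    · rintro ⟨S, j⟩ hx
      rw [Finset.mem_sigma, Finset.mem_sdiff] at hx
      simp only [Sigma.mk.inj_iff, heq_eq_eq, and_true]
      exact Finset.erase_insert hx.2.2
    · rintro ⟨U, j⟩ hy
      rw [Finset.mem_sigma] at hy
      simp only [Sigma.mk.inj_iff, heq_eq_eq, and_true]
      exact Finset.insert_erase hy.2
    · rintro ⟨S, j⟩ hx
      rw [Finset.mem_sigma, Finset.mem_sdiff] at hx
      exact (Finset.prod_insert hx.2.2).symm
  have hR : esymm (Fin n) (ZMod 2) 1 * esymm (Fin n) (ZMod 2) m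
      = (∑ S ∈ powersetCard m (univ : Finset (Fin n)), ∑ j ∈ S,
            (X j * ∏ i ∈ S, X i : MvPolynomial (Fin n) (ZMod 2)))
        + C ((m + 1 : ℕ) : ZMod 2) * esymm (Fin n) (ZMod 2) (m + 1) := by
    rw [esymm_one, esymm, Finset.sum_mul_sum, Finset.sum_comm, ← hA, ← Finset.sum_add_distrib]
    refine Finset.sum_congr rfl fun S hS => ?_
    rw [add_comm, Finset.sum_sdiff (Finset.subset_univ S)]
  rw [hL, hR]
  have hz : (C ((m + 1 : ℕ) : ZMod 2) * esymm (Fin n) (ZMod 2) (m + 1))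
      + (C ((m + 1 : ℕ) : ZMod 2) * esymm (Fin n) (ZMod 2) (m + 1)) = 0 := by
    rw [← add_mul, ← C_add]
    have : ((m + 1 : ℕ) : ZMod 2) + ((m + 1 : ℕ) : ZMod 2) = 0 := by
      have : ∀ x : ZMod 2, x + x = 0 := by decide
      exact this _
    rw [this, C_0, zero_mul]
  rw [add_assoc, hz, add_zero]
end

section
/- Let n ≥ 1 and let φ: 𝔽₂[t₁,…,t_n] → 𝔽₂[t₁,…,t_n] be the ring homomorphism with φ(tᵢ)=tᵢ+tᵢ². For 1 ≤ m ≤ n, the homogeneous component of polynomial degree m+2 of φ(e_m) equals e₂·e_m + m·e₁·e_{m+1} + binom(m−1,2)·e_{m+2}, where e_k is the k-th elementary symmetric polynomial (e_k := 0 for k > n) and the integer coefficients m and binom(m−1,2) are reduced mod 2. -/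
open MvPolynomial Finset

set_option linter.unusedSectionVars false
set_option maxHeartbeats 1000000
section WuProof

namespace WuAux
variable {σ : Type*} [Fintype σ] [DecidableEq σ] [LinearOrder σ] [Nonempty σ]

noncomputable def P (S : Finset σ) : MvPolynomial σ (ZMod 2) := ∏ i ∈ S, X i

lemma P_hom (S : Finset σ) : (P S).IsHomogeneous S.card := by
  have := MvPolynomial.IsHomogeneous.prod S (fun i => (X i : MvPolynomial σ (ZMod 2)))
    (fun _ => 1) (fun i _ => isHomogeneous_X _ i)
  simpa [P] using this

noncomputable def Lsum (m : ℕ) : MvPolynomial σ (ZMod 2) :=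
  ∑ S ∈ powersetCard m (univ : Finset σ), ∑ U ∈ powersetCard 2 S, P (S \ U) * P U ^ 2

noncomputable def Q (m : ℕ) : MvPolynomial σ (ZMod 2) :=
  ∑ U ∈ powersetCard (m + 1) (univ : Finset σ), ∑ a ∈ U, X a ^ 2 * P (U.erase a)

lemma esymm_eq_sum_P (k : ℕ) :
    esymm σ (ZMod 2) k = ∑ S ∈ powersetCard k (univ : Finset σ), P S := rfl

lemma lhs_eq (m : ℕ) :
    homogeneousComponent (m + 2)
      (aeval (fun i => X i + (X i) ^ 2) (esymm σ (ZMod 2) m)) = Lsum m := by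
  have step1 : aeval (fun i => X i + (X i) ^ 2) (esymm σ (ZMod 2) m)
      = ∑ S ∈ powersetCard m (univ : Finset σ), ∑ T ∈ S.powerset, P T * P (S \ T) ^ 2 := by
    rw [esymm, map_sum]
    refine Finset.sum_congr rfl fun S _ => ?_
    rw [map_prod]
    simp only [aeval_X]
    rw [Finset.prod_add]
    refine Finset.sum_congr rfl fun T _ => ?_
    rw [P, P, Finset.prod_pow]
  rw [step1, map_sum, Lsum]
  refine Finset.sum_congr rfl fun S hS => ?_
  have hScard : S.card = m := (mem_powersetCard.mp hS).2
  rw [map_sum]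
  have step2 : ∀ T ∈ S.powerset,
      homogeneousComponent (m + 2) (P T * P (S \ T) ^ 2)
        = if (S \ T).card = 2 then P T * P (S \ T) ^ 2 else 0 := by
    intro T hT
    have hTS := mem_powerset.mp hT
    have hhom : (P T * P (S \ T) ^ 2).IsHomogeneous (T.card + 2 * (S \ T).card) := by
      have h2 : (P (S \ T) ^ 2).IsHomogeneous (2 * (S \ T).card) := by
        rw [pow_two, two_mul]
        exact (P_hom _).mul (P_hom _)
      exact (P_hom T).mul h2
    rw [homogeneousComponent_of_mem ((mem_homogeneousSubmodule _ _).mpr hhom)]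
    have hc : (S \ T).card + T.card = m := by
      rw [← hScard]; exact card_sdiff_add_card_eq_card hTS
    by_cases h2 : (S \ T).card = 2
    · rw [if_pos (by omega), if_pos h2]
    · rw [if_neg (by omega), if_neg h2]
  rw [Finset.sum_congr rfl step2, Finset.sum_ite, Finset.sum_const_zero, add_zero]
  refine Finset.sum_bij' (fun T _ => S \ T) (fun U _ => S \ U) ?_ ?_ ?_ ?_ ?_
  · intro T hT
    simp only [mem_filter, mem_powerset] at hT
    exact mem_powersetCard.mpr ⟨sdiff_subset, hT.2⟩
  · intro U hU
    obtain ⟨hUS, hUc⟩ := mem_powersetCard.mp hU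
    simp only [mem_filter, mem_powerset]
    exact ⟨sdiff_subset, by rw [_root_.sdiff_sdiff_eq_self hUS, hUc]⟩
  · intro T hT
    simp only [mem_filter, mem_powerset] at hT
    exact _root_.sdiff_sdiff_eq_self hT.1
  · intro U hU
    obtain ⟨hUS, _⟩ := mem_powersetCard.mp hU
    exact _root_.sdiff_sdiff_eq_self hUS
  · intro T hT
    simp only [mem_filter, mem_powerset] at hT
    rw [_root_.sdiff_sdiff_eq_self hT.1]

lemma e1m (m : ℕ) :
    esymm σ (ZMod 2) 1 * esymm σ (ZMod 2) (m + 1)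
      = Q m + (m + 2) • esymm σ (ZMod 2) (m + 2) := by
  rw [esymm_one, esymm_eq_sum_P, Finset.sum_mul_sum, Finset.sum_comm]
  have split : ∀ U ∈ powersetCard (m + 1) (univ : Finset σ),
      ∑ a : σ, X a * P U
        = (∑ a ∈ U, X a ^ 2 * P (U.erase a)) + ∑ a ∈ Uᶜ, P (insert a U) := by
    intro U hU
    rw [← Finset.sum_add_sum_compl U]
    congr 1
    · refine Finset.sum_congr rfl fun a ha => ?_
      rw [P, ← Finset.mul_prod_erase U X ha, ← mul_assoc, ← pow_two, P]
    · refine Finset.sum_congr rfl fun a ha => ?_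
      rw [P, P, Finset.prod_insert (by simpa using ha)]
  rw [Finset.sum_congr rfl split, Finset.sum_add_distrib, ← Q]
  congr 1
  have : ∑ U ∈ powersetCard (m + 1) (univ : Finset σ), ∑ a ∈ Uᶜ, P (insert a U)
      = ∑ V ∈ powersetCard (m + 2) (univ : Finset σ), ∑ a ∈ V, P V := by
    rw [Finset.sum_sigma', Finset.sum_sigma']
    refine Finset.sum_bij' (fun x _ => (⟨insert x.2 x.1, x.2⟩ : Σ _ : Finset σ, σ))
      (fun x _ => (⟨x.1.erase x.2, x.2⟩ : Σ _ : Finset σ, σ)) ?_ ?_ ?_ ?_ ?_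
    · rintro ⟨U, a⟩ hx
      rw [mem_sigma] at hx ⊢
      obtain ⟨hU, ha⟩ := hx
      obtain ⟨-, hUc⟩ := mem_powersetCard.mp hU
      have ha' : a ∉ U := by simpa using ha
      exact ⟨mem_powersetCard.mpr ⟨subset_univ _, by rw [card_insert_of_notMem ha', hUc]⟩,
        mem_insert_self _ _⟩
    · rintro ⟨V, a⟩ hx
      rw [mem_sigma] at hx ⊢
      obtain ⟨hV, ha⟩ := hx
      obtain ⟨-, hVc⟩ := mem_powersetCard.mp hV
      exact ⟨mem_powersetCard.mpr ⟨subset_univ _, by simp [card_erase_of_mem ha, hVc]⟩,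
        by simp [mem_erase]⟩
    · rintro ⟨U, a⟩ hx
      rw [mem_sigma] at hx
      have ha' : a ∉ U := by simpa using hx.2
      simp [erase_insert ha']
    · rintro ⟨V, a⟩ hx
      rw [mem_sigma] at hx
      simp [insert_erase hx.2]
    · rintro ⟨U, a⟩ hx
      rfl
  rw [this]
  rw [esymm_eq_sum_P, Finset.smul_sum]
  refine Finset.sum_congr rfl fun V hV => ?_
  rw [Finset.sum_const, (mem_powersetCard.mp hV).2]

noncomputable def pick (s : Finset σ) : σ :=
  if h : s.Nonempty then s.min' h else Classical.arbitrary σ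

lemma pick_singleton (a : σ) : pick ({a} : Finset σ) = a := by
  rw [pick, dif_pos (singleton_nonempty a), min'_singleton]

abbrev Pr (m : ℕ) : Finset (Finset σ × Finset σ) :=
  (powersetCard 2 (univ : Finset σ)) ×ˢ (powersetCard m (univ : Finset σ))

-- Part C : disjoint part
lemma partC (m : ℕ) :
    ∑ p ∈ (Pr (σ := σ) m).filter (fun p => Disjoint p.1 p.2), P p.1 * P p.2
      = ((m + 2).choose 2) • esymm σ (ZMod 2) (m + 2) := by
  have hrhs : ((m + 2).choose 2) • esymm σ (ZMod 2) (m + 2)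
      = ∑ x ∈ (powersetCard (m + 2) (univ : Finset σ)).sigma
          (fun V => powersetCard 2 V), P x.1 := by
    rw [Finset.sum_sigma, esymm_eq_sum_P, Finset.smul_sum]
    refine Finset.sum_congr rfl fun V hV => ?_
    exact ((Finset.sum_const (P V)).trans
      (by rw [card_powersetCard, (mem_powersetCard.mp hV).2])).symm
  rw [hrhs]
  refine Finset.sum_bij' (fun p _ => (⟨p.1 ∪ p.2, p.1⟩ : Σ _ : Finset σ, Finset σ))
    (fun x _ => (x.2, x.1 \ x.2)) ?_ ?_ ?_ ?_ ?_
  · rintro ⟨T, S⟩ hp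
    simp only [mem_filter, mem_product, mem_powersetCard] at hp
    obtain ⟨⟨⟨-, hT⟩, -, hS⟩, hd⟩ := hp
    rw [mem_sigma]
    exact ⟨mem_powersetCard.mpr ⟨subset_univ _, by rw [card_union_of_disjoint hd, hT, hS, add_comm]⟩,
      mem_powersetCard.mpr ⟨subset_union_left, hT⟩⟩
  · rintro ⟨V, T⟩ hx
    rw [mem_sigma] at hx
    obtain ⟨hV, hT⟩ := hx
    obtain ⟨-, hVc⟩ := mem_powersetCard.mp hV
    obtain ⟨hTV, hTc⟩ := mem_powersetCard.mp hT
    simp only [mem_filter, mem_product, mem_powersetCard]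
    refine ⟨⟨⟨subset_univ _, hTc⟩, subset_univ _, ?_⟩, disjoint_sdiff⟩
    rw [card_sdiff_of_subset hTV, hVc, hTc]
    omega
  · rintro ⟨T, S⟩ hp
    simp only [mem_filter] at hp
    show (T, (T ∪ S) \ T) = (T, S)
    rw [union_sdiff_cancel_left hp.2]
  · rintro ⟨V, T⟩ hx
    rw [mem_sigma] at hx
    have hTV := (mem_powersetCard.mp hx.2).1
    simp [union_sdiff_of_subset hTV]
  · rintro ⟨T, S⟩ hp
    simp only [mem_filter] at hp
    show P T * P S = P (T ∪ S)
    rw [P, P, P, ← Finset.prod_union hp.2]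

-- Part A : subset part
lemma partA (m : ℕ) :
    ∑ p ∈ (Pr (σ := σ) m).filter (fun p => p.1 ⊆ p.2), P p.1 * P p.2 = Lsum m := by
  rw [Lsum, Finset.sum_sigma']
  refine Finset.sum_bij' (fun p _ => (⟨p.2, p.1⟩ : Σ _ : Finset σ, Finset σ))
    (fun x _ => (x.2, x.1)) ?_ ?_ ?_ ?_ ?_
  · rintro ⟨T, S⟩ hp
    simp only [mem_filter, mem_product, mem_powersetCard] at hp
    obtain ⟨⟨⟨-, hT⟩, -, hS⟩, hsub⟩ := hp
    rw [mem_sigma]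
    exact ⟨mem_powersetCard.mpr ⟨subset_univ _, hS⟩, mem_powersetCard.mpr ⟨hsub, hT⟩⟩
  · rintro ⟨S, U⟩ hx
    rw [mem_sigma] at hx
    obtain ⟨hS, hU⟩ := hx
    obtain ⟨hUS, hUc⟩ := mem_powersetCard.mp hU
    obtain ⟨-, hSc⟩ := mem_powersetCard.mp hS
    simp only [mem_filter, mem_product, mem_powersetCard]
    exact ⟨⟨⟨subset_univ _, hUc⟩, subset_univ _, hSc⟩, hUS⟩
  · rintro ⟨T, S⟩ _; rfl
  · rintro ⟨S, U⟩ _; rfl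
  · rintro ⟨T, S⟩ hp
    simp only [mem_filter] at hp
    show P T * P S = P (S \ T) * P T ^ 2
    rw [P, P, P, ← Finset.prod_sdiff hp.2, pow_two]
    ring

lemma partB (m : ℕ) :
    ∑ p ∈ (Pr (σ := σ) m).filter (fun p => (p.1 ∩ p.2).card = 1), P p.1 * P p.2
      = m • Q m := by
  have key : ∀ p ∈ (Pr (σ := σ) m).filter (fun p => (p.1 ∩ p.2).card = 1),
      ∃ a b, p.1 ∩ p.2 = {a} ∧ p.1 \ p.2 = {b} ∧ a ∈ p.2 ∧ b ∉ p.2 ∧ a ≠ b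
        ∧ p.1 = {a, b} := by
    rintro ⟨T, S⟩ hp
    simp only [mem_filter, mem_product, mem_powersetCard] at hp
    obtain ⟨⟨⟨-, hT2⟩, -, -⟩, hc1⟩ := hp
    obtain ⟨a, ha⟩ := card_eq_one.mp hc1
    have hsd : (T \ S).card = 1 := by
      have := card_sdiff_add_card_inter T S
      omega
    obtain ⟨b, hb⟩ := card_eq_one.mp hsd
    have haS : a ∈ S := by
      have : a ∈ T ∩ S := ha ▸ mem_singleton_self a
      exact (mem_inter.mp this).2
    have hbS : b ∉ S := by
      have : b ∈ T \ S := hb ▸ mem_singleton_self b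
      exact (mem_sdiff.mp this).2
    have hne : a ≠ b := fun h => hbS (h ▸ haS)
    refine ⟨a, b, ha, hb, haS, hbS, hne, ?_⟩
    have hu : T ∩ S ∪ T \ S = T := by
      ext c; by_cases hc : c ∈ S <;> simp [hc]
    rw [← hu, ha, hb]
    rfl
  have hrhs : m • Q m
      = ∑ x ∈ (powersetCard (m + 1) (univ : Finset σ)).sigma
          (fun U => U.sigma (fun a => U.erase a)),
            X x.2.1 ^ 2 * P (x.1.erase x.2.1) := by
    rw [Q, Finset.smul_sum, Finset.sum_sigma]
    refine Finset.sum_congr rfl fun U hU => ?_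
    rw [Finset.smul_sum, Finset.sum_sigma]
    refine Finset.sum_congr rfl fun a ha => ?_
    exact ((Finset.sum_const (X a ^ 2 * P (U.erase a))).trans (by
      rw [card_erase_of_mem ha, (mem_powersetCard.mp hU).2, Nat.add_sub_cancel])).symm
  rw [hrhs]
  refine Finset.sum_bij'
    (fun p _ => (⟨p.1 ∪ p.2, pick (p.1 ∩ p.2), pick (p.1 \ p.2)⟩ :
      Σ _ : Finset σ, Σ _ : σ, σ))
    (fun x _ => ({x.2.1, x.2.2}, x.1.erase x.2.2)) ?_ ?_ ?_ ?_ ?_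
  · rintro ⟨T, S⟩ hp
    obtain ⟨a, b, ha, hb, haS, hbS, hne, hT⟩ := key _ hp
    have hT' : T = {a, b} := hT
    simp only [mem_filter, mem_product, mem_powersetCard] at hp
    obtain ⟨⟨⟨-, hT2⟩, -, hSm⟩, hc1⟩ := hp
    simp only [ha, hb, pick_singleton, mem_sigma]
    have haT : a ∈ T := by rw [hT']; exact mem_insert_self a {b}
    have hbT : b ∈ T := by rw [hT']; exact mem_insert_of_mem (mem_singleton_self b)
    refine ⟨mem_powersetCard.mpr ⟨subset_univ _, ?_⟩, mem_union_left _ haT, ?_⟩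
    · have := card_union_add_card_inter T S
      omega
    · exact mem_erase.mpr ⟨hne.symm, mem_union_left _ hbT⟩
  · rintro ⟨U, a, b⟩ hx
    simp only [mem_sigma, mem_erase] at hx
    obtain ⟨hU, haU, hba, hbU⟩ := hx
    obtain ⟨-, hUc⟩ := mem_powersetCard.mp hU
    have hne : a ≠ b := fun h => hba h.symm
    simp only [mem_filter, mem_product, mem_powersetCard]
    refine ⟨⟨⟨subset_univ _, card_pair hne⟩, subset_univ _, ?_⟩, ?_⟩
    · rw [card_erase_of_mem hbU, hUc]
      omega
    · have : ({a, b} : Finset σ) ∩ U.erase b = {a} := by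
        ext c
        simp only [mem_inter, mem_insert, mem_singleton, mem_erase]
        constructor
        · rintro ⟨rfl | rfl, hc⟩
          · rfl
          · exact absurd rfl hc.1
        · rintro rfl
          exact ⟨Or.inl rfl, hne, haU⟩
      rw [this, card_singleton]
  · rintro ⟨T, S⟩ hp
    obtain ⟨a, b, ha, hb, haS, hbS, hne, hT⟩ := key _ hp
    have hT' : T = {a, b} := hT
    have ha' : (T, S).1 ∩ (T, S).2 = {a} := ha
    have hb' : (T, S).1 \ (T, S).2 = {b} := hb
    show ({pick ((T, S).1 ∩ (T, S).2), pick ((T, S).1 \ (T, S).2)},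
      ((T, S).1 ∪ (T, S).2).erase (pick ((T, S).1 \ (T, S).2))) = (T, S)
    rw [ha', hb', pick_singleton, pick_singleton]
    have hsnd : (T ∪ S).erase b = S := by
      ext c
      simp only [mem_erase, mem_union, hT', mem_insert, mem_singleton]
      constructor
      · rintro ⟨hcb, (rfl | rfl) | hcS⟩
        · exact haS
        · exact absurd rfl hcb
        · exact hcS
      · intro hcS
        exact ⟨fun h => hbS (h ▸ hcS), Or.inr hcS⟩
    rw [hsnd, ← hT']
  · rintro ⟨U, a, b⟩ hx
    simp only [mem_sigma, mem_erase] at hx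
    obtain ⟨hU, haU, hba, hbU⟩ := hx
    have hne : a ≠ b := fun h => hba h.symm
    have h1 : ({a, b} : Finset σ) ∩ U.erase b = {a} := by
      ext c
      simp only [mem_inter, mem_insert, mem_singleton, mem_erase]
      constructor
      · rintro ⟨rfl | rfl, hc⟩
        · rfl
        · exact absurd rfl hc.1
      · rintro rfl
        exact ⟨Or.inl rfl, hne, haU⟩
    have h2 : ({a, b} : Finset σ) \ U.erase b = {b} := by
      ext c
      simp only [mem_sdiff, mem_insert, mem_singleton, mem_erase, not_and]
      constructor
      · rintro ⟨rfl | rfl, hc⟩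
        · exact absurd haU (hc hne)
        · rfl
      · rintro rfl
        exact ⟨Or.inr rfl, fun h => absurd rfl h⟩
    have h3 : ({a, b} : Finset σ) ∪ U.erase b = U := by
      ext c
      simp only [mem_union, mem_insert, mem_singleton, mem_erase]
      constructor
      · rintro ((rfl | rfl) | ⟨-, hc⟩)
        · exact haU
        · exact hbU
        · exact hc
      · intro hc
        by_cases hcb : c = b
        · exact Or.inl (Or.inr hcb)
        · exact Or.inr ⟨hcb, hc⟩
    show (⟨({a, b} : Finset σ) ∪ U.erase b, pick (({a, b} : Finset σ) ∩ U.erase b),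
      pick (({a, b} : Finset σ) \ U.erase b)⟩ : Σ _ : Finset σ, Σ _ : σ, σ) = ⟨U, a, b⟩
    rw [h1, h2, h3, pick_singleton, pick_singleton]
  · rintro ⟨T, S⟩ hp
    obtain ⟨a, b, ha, hb, haS, hbS, hne, hT⟩ := key _ hp
    have hT' : T = {a, b} := hT
    have ha' : (T, S).1 ∩ (T, S).2 = {a} := ha
    show P T * P S
      = X (pick ((T, S).1 ∩ (T, S).2)) ^ 2
        * P (((T, S).1 ∪ (T, S).2).erase (pick ((T, S).1 ∩ (T, S).2)))
    rw [ha', pick_singleton]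
    show P T * P S = X a ^ 2 * P ((T ∪ S).erase a)
    have hTS : T ∪ S = insert b S := by
      ext c
      simp only [mem_union, hT', mem_insert, mem_singleton]
      constructor
      · rintro ((rfl | rfl) | hcS)
        · exact Or.inr haS
        · exact Or.inl rfl
        · exact Or.inr hcS
      · rintro (rfl | hcS)
        · exact Or.inl (Or.inr rfl)
        · exact Or.inr hcS
    have herase : (T ∪ S).erase a = insert b (S.erase a) := by
      rw [hTS, erase_insert_of_ne (fun h => hne (h.symm)), ]
    have hbSe : b ∉ S.erase a := fun h => hbS (mem_of_mem_erase h)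
    rw [P, P, P, herase, prod_insert hbSe, ← Finset.mul_prod_erase S X haS,
      hT', prod_pair hne]
    ring

lemma e2m (m : ℕ) :
    esymm σ (ZMod 2) 2 * esymm σ (ZMod 2) m
      = Lsum m + m • Q m + ((m + 2).choose 2) • esymm σ (ZMod 2) (m + 2) := by
  have hprod : esymm σ (ZMod 2) 2 * esymm σ (ZMod 2) m
      = ∑ p ∈ Pr (σ := σ) m, P p.1 * P p.2 := by
    rw [esymm_eq_sum_P, esymm_eq_sum_P, Finset.sum_mul_sum, Pr]
    exact (Finset.sum_product' _ _ (fun a b => P a * P b)).symm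
  rw [hprod, ← Finset.sum_filter_add_sum_filter_not (Pr (σ := σ) m) (fun p => p.1 ⊆ p.2),
    partA, ← Finset.sum_filter_add_sum_filter_not
      ((Pr (σ := σ) m).filter (fun p => ¬ p.1 ⊆ p.2)) (fun p => (p.1 ∩ p.2).card = 1),
    Finset.filter_filter, Finset.filter_filter]
  have hmem2 : ∀ p ∈ Pr (σ := σ) m, (p.1).card = 2 := by
    rintro ⟨T, S⟩ hp
    simp only [mem_product, mem_powersetCard] at hp
    exact hp.1.2
  have hiff1 : ∀ p ∈ Pr (σ := σ) m,
      ((¬ p.1 ⊆ p.2) ∧ (p.1 ∩ p.2).card = 1) ↔ (p.1 ∩ p.2).card = 1 := by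
    intro p hp
    refine ⟨fun h => h.2, fun h => ⟨fun hsub => ?_, h⟩⟩
    rw [inter_eq_left.mpr hsub, hmem2 p hp] at h
    omega
  have hiff0 : ∀ p ∈ Pr (σ := σ) m,
      ((¬ p.1 ⊆ p.2) ∧ ¬ (p.1 ∩ p.2).card = 1) ↔ Disjoint p.1 p.2 := by
    intro p hp
    constructor
    · rintro ⟨hsub, hc1⟩
      have hle : (p.1 ∩ p.2).card ≤ 2 := by
        rw [← hmem2 p hp]; exact card_le_card inter_subset_left
      have hne2 : (p.1 ∩ p.2).card ≠ 2 := by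
        intro h2
        exact hsub (inter_eq_left.mp
          (eq_of_subset_of_card_le inter_subset_left (by rw [h2, hmem2 p hp])))
      have : (p.1 ∩ p.2).card = 0 := by omega
      rw [disjoint_iff_inter_eq_empty]
      exact card_eq_zero.mp this
    · intro hd
      have he : p.1 ∩ p.2 = ∅ := disjoint_iff_inter_eq_empty.mp hd
      constructor
      · intro hsub
        rw [inter_eq_left.mpr hsub] at he
        have := hmem2 p hp
        rw [he] at this
        simp at this
      · rw [he]
        simp
  rw [Finset.filter_congr hiff1, Finset.filter_congr hiff0, partB, partC, add_assoc]

lemma natfact : ∀ k : ℕ, 2 ∣ ((k + 3).choose 2 + (k + 1) * (k + 3) + k.choose 2)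
  | 0 => by decide
  | (k + 1) => by
    show 2 ∣ ((k + 4).choose 2 + (k + 2) * (k + 4) + (k + 1).choose 2)
    have h1 : (k + 4).choose 2 = (k + 3).choose 1 + (k + 3).choose 2 :=
      Nat.choose_succ_succ _ _
    have h2 : (k + 1).choose 2 = k.choose 1 + k.choose 2 := Nat.choose_succ_succ _ _
    have h3 := natfact k
    have h4 : (k + 2) * (k + 4) = (k + 1) * (k + 3) + (2 * k + 5) := by ring
    simp only [Nat.choose_one_right] at h1 h2
    omega

end WuAux

open WuAux in
/-- Mod 2 Wu formula Sq⁴c_m = c₂c_m + m·c₁c_{m+1} + binom(m-1,2)·c_{m+2}. -/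
theorem stmt_4 (n : ℕ) (hn : 1 ≤ n) (m : ℕ) (hm1 : 1 ≤ m) (hmn : m ≤ n) :
    homogeneousComponent (m + 2)
      (aeval (fun i => X i + (X i) ^ 2) (esymm (Fin n) (ZMod 2) m)) =
    esymm (Fin n) (ZMod 2) 2 * esymm (Fin n) (ZMod 2) m
      + C ((m : ℕ) : ZMod 2) * esymm (Fin n) (ZMod 2) 1 * esymm (Fin n) (ZMod 2) (m + 1)
      + C ((Nat.choose (m - 1) 2 : ℕ) : ZMod 2) * esymm (Fin n) (ZMod 2) (m + 2) := by
  haveI : Nonempty (Fin n) := ⟨⟨0, hn⟩⟩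
  rw [lhs_eq, e2m, mul_assoc, e1m]
  simp only [nsmul_eq_mul, map_natCast]
  have h2 : (2 : MvPolynomial (Fin n) (ZMod 2)) = 0 := by
    have := CharP.cast_eq_zero (MvPolynomial (Fin n) (ZMod 2)) 2
    exact_mod_cast this
  obtain ⟨t, ht⟩ : 2 ∣ ((m + 2).choose 2 + m * (m + 2) + (m - 1).choose 2) := by
    obtain ⟨k, rfl⟩ : ∃ k, m = k + 1 := ⟨m - 1, by omega⟩
    simpa using natfact k
  have hcast : (((m + 2).choose 2 : ℕ) : MvPolynomial (Fin n) (ZMod 2))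
      + (m : ℕ) * ((m + 2 : ℕ)) + (((m - 1).choose 2 : ℕ)) = 2 * (t : ℕ) := by
    exact_mod_cast congrArg (Nat.cast : ℕ → MvPolynomial (Fin n) (ZMod 2)) ht
  linear_combination (- (esymm (Fin n) (ZMod 2) (m + 2))) * hcast
    + (- ((m : ℕ) * Q m + (t : ℕ) * esymm (Fin n) (ZMod 2) (m + 2))) * h2

end WuProof
end

section
/- Let n ≥ 1 and let ψ: 𝔽₃[t₁,…,t_n] → 𝔽₃[t₁,…,t_n] be the ring homomorphism with ψ(tᵢ)=tᵢ+tᵢ³. For 1 ≤ m ≤ n, the homogeneous component of polynomial degree m+2 of ψ(e_m) equals (m+2)·e_{m+2} − e₁·e_{m+1} + (e₁²+e₂)·e_m, where e_k is the k-th elementary symmetric polynomial in t₁,…,t_n (e_k := 0 for k > n) and (m+2) is reduced mod 3. -/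
open MvPolynomial

namespace Wu3Aux

open Finset

variable {σ : Type*} [Fintype σ] [DecidableEq σ]

lemma pair_swap {M : Type*} [AddCommMonoid M] (r : ℕ) (F : Finset σ → σ → M) :
    ∑ S ∈ powersetCard (r + 1) (univ : Finset σ), ∑ i ∈ S, F (S.erase i) i
      = ∑ A ∈ powersetCard r (univ : Finset σ), ∑ i ∈ Aᶜ, F A i := by
  rw [sum_sigma' (powersetCard (r + 1) (univ : Finset σ)) (fun S => S)
      (fun S i => F (S.erase i) i),
    sum_sigma' (powersetCard r (univ : Finset σ)) (fun A => Aᶜ) (fun A i => F A i)]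
  refine sum_nbij' (fun x => ⟨x.1.erase x.2, x.2⟩) (fun x => ⟨insert x.2 x.1, x.2⟩) ?_ ?_ ?_ ?_ ?_
  · rintro ⟨S, i⟩ h
    simp only [mem_sigma, mem_powersetCard_univ, mem_compl] at h ⊢
    exact ⟨by rw [card_erase_of_mem h.2, h.1, Nat.add_sub_cancel], notMem_erase _ _⟩
  · rintro ⟨A, i⟩ h
    simp only [mem_sigma, mem_powersetCard_univ, mem_compl] at h ⊢
    exact ⟨by rw [card_insert_of_notMem h.2, h.1], mem_insert_self _ _⟩
  · rintro ⟨S, i⟩ h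
    simp only [mem_sigma] at h
    simp [insert_erase h.2]
  · rintro ⟨A, i⟩ h
    simp only [mem_sigma, mem_compl] at h
    simp [erase_insert h.2]
  · rintro ⟨S, i⟩ h; rfl

variable (R : Type*) [CommRing R]

lemma hc_aeval {m : ℕ} (hm : 1 ≤ m) :
    homogeneousComponent (m + 2) (aeval (fun i => X i + (X i) ^ 3) (esymm σ R m))
      = ∑ A ∈ powersetCard (m - 1) (univ : Finset σ), ∑ i ∈ Aᶜ,
          (X i : MvPolynomial σ R) ^ 3 * ∏ j ∈ A, X j := by
  have h1 : (aeval (fun i => X i + (X i) ^ 3) (esymm σ R m) : MvPolynomial σ R)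
      = ∑ S ∈ powersetCard m (univ : Finset σ), ∏ i ∈ S, ((X i) ^ 3 + X i) := by
    rw [esymm, map_sum]
    refine sum_congr rfl fun S _ => ?_
    rw [map_prod]
    exact prod_congr rfl fun i _ => by rw [aeval_X]; ring
  rw [h1, map_sum]
  have h2 : ∀ S ∈ powersetCard m (univ : Finset σ),
      homogeneousComponent (m + 2) (∏ i ∈ S, ((X i : MvPolynomial σ R) ^ 3 + X i))
        = ∑ i ∈ S, (X i : MvPolynomial σ R) ^ 3 * ∏ j ∈ S.erase i, X j := by
    intro S hS
    have hScard : S.card = m := (mem_powersetCard_univ).mp hS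
    rw [prod_add, map_sum]
    have key : ∀ t ∈ S.powerset,
        homogeneousComponent (m + 2)
            ((∏ i ∈ t, (X i : MvPolynomial σ R) ^ 3) * ∏ i ∈ S \ t, X i)
          = if t.card = 1 then (∏ i ∈ t, (X i : MvPolynomial σ R) ^ 3) * ∏ i ∈ S \ t, X i
            else 0 := by
      intro t ht
      have htS : t ⊆ S := mem_powerset.mp ht
      have htc : t.card ≤ m := hScard ▸ card_le_card htS
      have hhom : ((∏ i ∈ t, (X i : MvPolynomial σ R) ^ 3) * ∏ i ∈ S \ t, X i).IsHomogeneous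
          (t.card * 3 + (S \ t).card) := by
        have ha : (∏ i ∈ t, (X i : MvPolynomial σ R) ^ 3).IsHomogeneous (t.card * 3) := by
          have := IsHomogeneous.prod t (fun i => (X i : MvPolynomial σ R) ^ 3) (fun _ => 3)
            (fun i _ => by simpa using isHomogeneous_X_pow i 3)
          simpa [sum_const, smul_eq_mul] using this
        have hb : (∏ i ∈ S \ t, (X i : MvPolynomial σ R)).IsHomogeneous (S \ t).card := by
          have := IsHomogeneous.prod (S \ t) (fun i => (X i : MvPolynomial σ R)) (fun _ => 1)
            (fun i _ => by simpa using isHomogeneous_X R i)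
          simpa [sum_const, smul_eq_mul] using this
        exact ha.mul hb
      rw [homogeneousComponent_of_mem ((mem_homogeneousSubmodule _ _).mpr hhom)]
      have hcond : (m + 2 = t.card * 3 + (S \ t).card) ↔ t.card = 1 := by
        rw [card_sdiff_of_subset htS, hScard]
        omega
      rw [if_congr hcond rfl rfl]
    rw [sum_congr rfl key, ← sum_filter, ← powersetCard_eq_filter, powersetCard_one, sum_map]
    refine sum_congr rfl fun i hi => ?_
    simp [sdiff_singleton_eq_erase]
  rw [sum_congr rfl h2]
  have hm' : m = (m - 1) + 1 := by omega
  rw [show (powersetCard m (univ : Finset σ)) = powersetCard ((m-1)+1) univ by rw [← hm']]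
  exact pair_swap (m - 1) (fun A i => (X i : MvPolynomial σ R) ^ 3 * ∏ j ∈ A, X j)


/-- `TT m j` : sum over sets `A` of size `m - j` and `i ∉ A` of `X i ^ (j+3) * ∏_A X`. -/
noncomputable def TT (m j : ℕ) : MvPolynomial σ R :=
  ∑ A ∈ powersetCard (m - j) (univ : Finset σ), ∑ i ∈ Aᶜ, (X i) ^ (j + 3) * ∏ a ∈ A, X a

noncomputable def UU (m j : ℕ) : MvPolynomial σ R :=
  ∑ A ∈ powersetCard (m - j) (univ : Finset σ), ∑ i ∈ A, (X i) ^ (j + 3) * ∏ a ∈ A, X a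

lemma hsplit (m j : ℕ) :
    psum σ R (j + 3) * esymm σ R (m - j) = UU R m j + TT R m j := by
  rw [psum, esymm, Finset.sum_mul_sum, Finset.sum_comm, TT, UU, ← sum_add_distrib]
  refine sum_congr rfl fun A _ => ?_
  rw [← sum_add_sum_compl A (fun i => (X i : MvPolynomial σ R) ^ (j + 3) * ∏ a ∈ A, X a)]

lemma hUsucc (m j : ℕ) (hj : j + 1 ≤ m) : UU (σ := σ) R m j = TT R m (j + 1) := by
  have h1 : m - j = (m - (j + 1)) + 1 := by omega
  rw [UU, h1]
  calc ∑ A ∈ powersetCard ((m - (j+1)) + 1) (univ : Finset σ), ∑ i ∈ A,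
        (X i : MvPolynomial σ R) ^ (j + 3) * ∏ a ∈ A, X a
      = ∑ A ∈ powersetCard ((m - (j+1)) + 1) (univ : Finset σ), ∑ i ∈ A,
        (X i : MvPolynomial σ R) ^ (j + 1 + 3) * ∏ a ∈ A.erase i, X a := by
        refine sum_congr rfl fun A _ => sum_congr rfl fun i hi => ?_
        rw [← mul_prod_erase A _ hi]; ring
    _ = TT R m (j + 1) :=
        pair_swap _ (fun B  i => (X i : MvPolynomial σ R) ^ (j + 1 + 3) * ∏ a ∈ B, X a)

lemma hUlast (m : ℕ) : UU (σ := σ) R m m = 0 := by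
  simp [UU, Nat.sub_self, powersetCard_zero]

lemma telescope (k : ℕ) :
    ∑ j ∈ range (k + 1), (-1 : MvPolynomial σ R) ^ j * (psum σ R (j + 3) * esymm σ R (k - j))
      = TT R k 0 := by
  rw [sum_range_succ]
  have hmain : ∀ j ∈ range k, (-1 : MvPolynomial σ R) ^ j *
      (psum σ R (j + 3) * esymm σ R (k - j))
        = (-1 : MvPolynomial σ R) ^ j * TT R k j
          - (-1 : MvPolynomial σ R) ^ (j + 1) * TT R k (j + 1) := by
    intro j hj
    rw [hsplit, hUsucc R k j (by have := mem_range.mp hj; omega)]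
    rw [pow_succ]
    ring
  rw [sum_congr rfl hmain, sum_range_sub' (fun j => (-1 : MvPolynomial σ R) ^ j * TT R k j),
    hsplit R k k, hUlast R k]
  ring


lemma newton_range (k : ℕ) :
    ((k : ℕ) : MvPolynomial σ R) * esymm σ R k
      = (-1) ^ (k + 1) *
        ∑ i ∈ range k, (-1 : MvPolynomial σ R) ^ i * esymm σ R i * psum σ R (k - i) := by
  rw [mul_esymm_eq_sum]
  congr 1
  refine sum_nbij' (fun a => a.1) (fun i => (i, k - i)) ?_ ?_ ?_ ?_ ?_
  · rintro ⟨a, b⟩ h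
    simp only [mem_filter, HasAntidiagonal.mem_antidiagonal, mem_range] at h ⊢
    omega
  · intro i hi
    simp only [mem_range] at hi
    simp only [mem_filter, HasAntidiagonal.mem_antidiagonal]
    omega
  · rintro ⟨a, b⟩ h
    simp only [mem_filter, HasAntidiagonal.mem_antidiagonal] at h
    have : k - a = b := by omega
    simp [this]
  · intro i hi; rfl
  · rintro ⟨a, b⟩ h
    simp only [mem_filter, HasAntidiagonal.mem_antidiagonal] at h
    have : k - a = b := by omega
    simp [this]

lemma p2_eq : psum σ R 2 = esymm σ R 1 * esymm σ R 1 - 2 * esymm σ R 2 := by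
  have h := mul_esymm_eq_sum σ R 2
  have hset : ({a ∈ antidiagonal 2 | a.1 < 2} : Finset (ℕ × ℕ)) = {(0, 2), (1, 1)} := by decide
  rw [hset, sum_insert (by decide), sum_singleton] at h
  simp only [pow_zero, pow_one, esymm_zero, psum_one, esymm_one, one_mul, neg_one_mul] at h
  rw [esymm_one]
  push_cast at h
  linear_combination h

end Wu3Aux

open Finset in
/-- Mod 3 Wu formula 𝒫¹c_m = (m+2)c_{m+2} − c₁c_{m+1} + (c₁² + c₂)c_m. -/
theorem stmt_5 (n : ℕ) (hn : 1 ≤ n) (m : ℕ) (hm1 : 1 ≤ m) (hmn : m ≤ n) :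
    homogeneousComponent (m + 2)
      (aeval (fun i => X i + (X i) ^ 3) (esymm (Fin n) (ZMod 3) m)) =
    C ((m + 2 : ℕ) : ZMod 3) * esymm (Fin n) (ZMod 3) (m + 2)
      - esymm (Fin n) (ZMod 3) 1 * esymm (Fin n) (ZMod 3) (m + 1)
      + ((esymm (Fin n) (ZMod 3) 1) ^ 2 + esymm (Fin n) (ZMod 3) 2)
        * esymm (Fin n) (ZMod 3) m := by
  have hstep1 := Wu3Aux.hc_aeval (σ := Fin n) (ZMod 3) hm1
  -- identify the extracted component with `TT`
  have hTT : Wu3Aux.TT (σ := Fin n) (ZMod 3) (m - 1) 0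
      = ∑ A ∈ powersetCard (m - 1) (univ : Finset (Fin n)), ∑ i ∈ Aᶜ,
          (X i : MvPolynomial (Fin n) (ZMod 3)) ^ 3 * ∏ j ∈ A, X j := by
    simp [Wu3Aux.TT]
  -- the telescoped identity
  have ht := Wu3Aux.telescope (σ := Fin n) (ZMod 3) (m - 1)
  rw [show m - 1 + 1 = m by omega] at ht
  -- Newton's identity for k = m + 2, converted to a range sum
  have hN := Wu3Aux.newton_range (σ := Fin n) (ZMod 3) (m + 2)
  rw [sum_range_succ, sum_range_succ] at hN
  rw [show m + 2 - (m + 1) = 1 by omega, show m + 2 - m = 2 by omega] at hN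
  -- reflect the range sum
  have hrefl : ∑ i ∈ range m, (-1 : MvPolynomial (Fin n) (ZMod 3)) ^ i
        * esymm (Fin n) (ZMod 3) i * psum (Fin n) (ZMod 3) (m + 2 - i)
      = (-1) ^ (m - 1) * Wu3Aux.TT (σ := Fin n) (ZMod 3) (m - 1) 0 := by
    rw [← sum_range_reflect]
    have hcong : ∀ j ∈ range m, (-1 : MvPolynomial (Fin n) (ZMod 3)) ^ (m - 1 - j)
          * esymm (Fin n) (ZMod 3) (m - 1 - j) * psum (Fin n) (ZMod 3) (m + 2 - (m - 1 - j))
        = (-1) ^ (m - 1) * ((-1) ^ j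
            * (psum (Fin n) (ZMod 3) (j + 3) * esymm (Fin n) (ZMod 3) (m - 1 - j))) := by
      intro j hj
      have hjm := mem_range.mp hj
      have h1 : m + 2 - (m - 1 - j) = j + 3 := by omega
      have h2 : (-1 : MvPolynomial (Fin n) (ZMod 3)) ^ (m - 1 - j)
          = (-1) ^ (m - 1) * (-1) ^ j := by
        rw [← pow_add, show m - 1 + j = (m - 1 - j) + 2 * j by omega, pow_add, pow_mul,
          neg_one_sq, one_pow, mul_one]
      rw [h1, h2]; ring
    rw [sum_congr rfl hcong, ← mul_sum, ht]
  rw [hrefl] at hN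
  -- clean up the signs by parity case analysis
  have hfin : Wu3Aux.TT (σ := Fin n) (ZMod 3) (m - 1) 0
      = ((m + 2 : ℕ) : MvPolynomial (Fin n) (ZMod 3)) * esymm (Fin n) (ZMod 3) (m + 2)
        + esymm (Fin n) (ZMod 3) m * psum (Fin n) (ZMod 3) 2
        - esymm (Fin n) (ZMod 3) (m + 1) * psum (Fin n) (ZMod 3) 1 := by
    rcases Nat.even_or_odd m with hpar | hpar
    · obtain ⟨t, rfl⟩ := hpar
      have ht1 : 1 ≤ t := by omega
      rw [show ((-1 : MvPolynomial (Fin n) (ZMod 3)) ^ (t + t + 2 + 1)) = -1 from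
          Odd.neg_one_pow ⟨t + 1, by omega⟩,
        show ((-1 : MvPolynomial (Fin n) (ZMod 3)) ^ (t + t - 1)) = -1 from
          Odd.neg_one_pow ⟨t - 1, by omega⟩,
        show ((-1 : MvPolynomial (Fin n) (ZMod 3)) ^ (t + t)) = 1 from
          Even.neg_one_pow ⟨t, rfl⟩,
        show ((-1 : MvPolynomial (Fin n) (ZMod 3)) ^ (t + t + 1)) = -1 from
          Odd.neg_one_pow ⟨t, by omega⟩] at hN
      linear_combination -hN
    · obtain ⟨t, rfl⟩ := hpar
      rw [show ((-1 : MvPolynomial (Fin n) (ZMod 3)) ^ (2 * t + 1 + 2 + 1)) = 1 from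
          Even.neg_one_pow ⟨t + 2, by omega⟩,
        show ((-1 : MvPolynomial (Fin n) (ZMod 3)) ^ (2 * t + 1 - 1)) = 1 from
          Even.neg_one_pow ⟨t, by omega⟩,
        show ((-1 : MvPolynomial (Fin n) (ZMod 3)) ^ (2 * t + 1)) = -1 from
          Odd.neg_one_pow ⟨t, by omega⟩,
        show ((-1 : MvPolynomial (Fin n) (ZMod 3)) ^ (2 * t + 1 + 1)) = 1 from
          Even.neg_one_pow ⟨t + 1, by omega⟩] at hN
      linear_combination -hN
  rw [hstep1, ← hTT, hfin, Wu3Aux.p2_eq, psum_one, ← esymm_one (Fin n) (ZMod 3)]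
  have hC : (C ((m + 2 : ℕ) : ZMod 3) : MvPolynomial (Fin n) (ZMod 3))
      = ((m + 2 : ℕ) : MvPolynomial (Fin n) (ZMod 3)) := C_eq_coe_nat _
  rw [hC]
  have h3 : (3 : MvPolynomial (Fin n) (ZMod 3)) = 0 := by
    have : ((3 : ℕ) : ZMod 3) = 0 := rfl
    rw [show (3 : MvPolynomial (Fin n) (ZMod 3)) = C ((3 : ℕ) : ZMod 3) from by
      rw [C_eq_coe_nat]; norm_num, this, map_zero]
  linear_combination (-(esymm (Fin n) (ZMod 3) 2 * esymm (Fin n) (ZMod 3) m)) * h3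
end

section
/- Let n ≥ 1 and let χ: 𝔽₅[t₁,…,t_n] → 𝔽₅[t₁,…,t_n] be the ring homomorphism with χ(tᵢ)=tᵢ+tᵢ⁵. For 1 ≤ m ≤ n, the homogeneous component of polynomial degree m+4 of χ(e_m) equals (m+4)e_{m+4} − e₁e_{m+3} + (e₁²−2e₂)e_{m+2} + (−e₁³−2e₁e₂+2e₃)e_{m+1} + (e₁⁴+e₁²e₂+2e₂²−e₁e₃+e₄)e_m, where e_k is the k-th elementary symmetric polynomial (e_k := 0 for k > n) and integer coefficients are reduced mod 5. -/
open MvPolynomial Finset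

section Aux

variable {σ : Type*} [Fintype σ] [DecidableEq σ] (R : Type*) [CommRing R]

/-- Elementary symmetric polynomial in the variables indexed by a finset `s`. -/
private noncomputable def auxE (s : Finset σ) (r : ℕ) : MvPolynomial σ R :=
  ∑ t ∈ s.powersetCard r, ∏ j ∈ t, X j

private lemma auxE_univ (r : ℕ) : auxE R (univ : Finset σ) r = esymm σ R r := rfl

private lemma auxE_zero (s : Finset σ) : auxE R s 0 = 1 := by
  simp [auxE]

private lemma auxE_insert {i : σ} {s : Finset σ} (hi : i ∉ s) (r : ℕ) :
    auxE R (insert i s) (r + 1) = auxE R s (r + 1) + X i * auxE R s r := by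
  unfold auxE
  rw [powersetCard_succ_insert hi, sum_union, Finset.sum_image, Finset.mul_sum]
  · congr 1
    refine Finset.sum_congr rfl fun t ht => ?_
    have hit : i ∉ t := fun h => hi ((mem_powersetCard.mp ht).1 h)
    rw [Finset.prod_insert hit]
  · intro a ha b hb hab
    have hia : i ∉ a := fun h => hi ((mem_powersetCard.mp ha).1 h)
    have hib : i ∉ b := fun h => hi ((mem_powersetCard.mp hb).1 h)
    rw [← Finset.erase_insert hia, ← Finset.erase_insert hib, hab]
  · rw [Finset.disjoint_right]
    rintro a ha hb
    obtain ⟨t, ht, rfl⟩ := Finset.mem_image.mp ha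
    exact hi ((mem_powersetCard.mp hb).1 (mem_insert_self i t))

private lemma esymm_split (i : σ) (r : ℕ) :
    esymm σ R (r + 1) =
      auxE R ((univ : Finset σ).erase i) (r + 1) + X i * auxE R ((univ : Finset σ).erase i) r := by
  have h := auxE_insert (i := i) (s := (univ : Finset σ).erase i) R (Finset.notMem_erase i _) r
  rw [Finset.insert_erase (Finset.mem_univ i)] at h
  rw [← auxE_univ, h]

private lemma pair_swap (r : ℕ) (f : σ → Finset σ → MvPolynomial σ R) :
    ∑ S ∈ (univ : Finset σ).powersetCard (r + 1), ∑ i ∈ S, f i (S.erase i)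
      = ∑ i : σ, ∑ t ∈ ((univ : Finset σ).erase i).powersetCard r, f i t := by
  rw [Finset.sum_sigma', Finset.sum_sigma']
  refine Finset.sum_nbij' (fun p => ⟨p.2, p.1.erase p.2⟩) (fun p => ⟨insert p.1 p.2, p.1⟩)
    ?_ ?_ ?_ ?_ ?_
  · rintro ⟨S, i⟩ hp
    rw [Finset.mem_sigma] at hp ⊢
    obtain ⟨hS, hiS⟩ := hp
    rw [Finset.mem_powersetCard] at hS
    refine ⟨Finset.mem_univ _, Finset.mem_powersetCard.mpr ⟨?_, ?_⟩⟩
    · exact Finset.erase_subset_erase _ hS.1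
    · rw [Finset.card_erase_of_mem hiS, hS.2]
      omega
  · rintro ⟨i, t⟩ hp
    rw [Finset.mem_sigma] at hp ⊢
    obtain ⟨-, ht⟩ := hp
    rw [Finset.mem_powersetCard] at ht
    have hit : i ∉ t := fun h => (Finset.notMem_erase i _) (ht.1 h)
    refine ⟨Finset.mem_powersetCard.mpr ⟨Finset.subset_univ _, ?_⟩, Finset.mem_insert_self _ _⟩
    rw [Finset.card_insert_of_notMem hit, ht.2]
  · rintro ⟨S, i⟩ hp
    rw [Finset.mem_sigma] at hp
    simp [Finset.insert_erase hp.2]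
  · rintro ⟨i, t⟩ hp
    rw [Finset.mem_sigma] at hp
    have hit : i ∉ t := fun h =>
      (Finset.notMem_erase i _) ((Finset.mem_powersetCard.mp hp.2).1 h)
    simp [Finset.erase_insert hit]
  · rintro ⟨S, i⟩ _
    rfl

/-- `auxB R k r = ∑ i, X i ^ k * e_r(variables ≠ i)`. -/
private noncomputable def auxB (k r : ℕ) : MvPolynomial σ R :=
  ∑ i : σ, X i ^ k * auxE R ((univ : Finset σ).erase i) r

private lemma auxB_zero (k : ℕ) : auxB (σ := σ) R k 0 = psum σ R k := by
  simp [auxB, auxE_zero, psum]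

private lemma auxB_rec (k r : ℕ) :
    auxB (σ := σ) R k (r + 1) = psum σ R k * esymm σ R (r + 1) - auxB R (k + 1) r := by
  unfold auxB psum
  rw [Finset.sum_mul, ← Finset.sum_sub_distrib]
  refine Finset.sum_congr rfl fun i _ => ?_
  rw [esymm_split R i r]
  ring

private lemma auxB_one (r : ℕ) :
    auxB (σ := σ) R 1 r = ((r + 1 : ℕ) : MvPolynomial σ R) * esymm σ R (r + 1) := by
  unfold auxB auxE
  simp_rw [pow_one, Finset.mul_sum]
  have h1 : ∀ i : σ, ∀ t ∈ ((univ : Finset σ).erase i).powersetCard r,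
      X (R := R) i * ∏ j ∈ t, X j = ∏ j ∈ insert i t, X j := by
    intro i t ht
    have hit : i ∉ t := fun h =>
      (Finset.notMem_erase i _) ((Finset.mem_powersetCard.mp ht).1 h)
    rw [Finset.prod_insert hit]
  rw [Finset.sum_congr rfl fun i _ => Finset.sum_congr rfl (h1 i)]
  rw [← pair_swap R r (fun i t => ∏ j ∈ insert i t, X j)]
  have h2 : ∀ S ∈ (univ : Finset σ).powersetCard (r + 1),
      ∑ i ∈ S, ∏ j ∈ insert i (S.erase i), (X j : MvPolynomial σ R)
        = ((r + 1 : ℕ) : MvPolynomial σ R) * ∏ j ∈ S, X j := by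
    intro S hS
    have hcard : S.card = r + 1 := (Finset.mem_powersetCard.mp hS).2
    rw [Finset.sum_congr rfl fun i hi => by rw [Finset.insert_erase hi]]
    rw [Finset.sum_const, hcard, nsmul_eq_mul]
  rw [Finset.sum_congr rfl h2, ← Finset.mul_sum]
  rfl

/-- The degree `m+5` homogeneous component of `χ(e_{m+1})`. -/
private lemma homog_part (m : ℕ) :
    homogeneousComponent (m + 1 + 4)
        (aeval (fun i : σ => X i + (X i) ^ 5) (esymm σ R (m + 1)))
      = auxB (σ := σ) R 5 m := by
  rw [esymm, map_sum]
  have hprod : ∀ S : Finset σ,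
      (aeval (fun i : σ => X i + (X i) ^ 5)) (∏ j ∈ S, (X j : MvPolynomial σ R))
        = ∑ t ∈ S.powerset, (∏ j ∈ t, (X j : MvPolynomial σ R) ^ 5) * ∏ j ∈ S \ t, X j := by
    intro S
    rw [map_prod]
    simp_rw [aeval_X]
    rw [Finset.prod_congr rfl fun j _ => add_comm (X j) ((X j) ^ 5)]
    exact Finset.prod_add _ _ S
  simp_rw [hprod, map_sum]
  have hcomp : ∀ S ∈ (univ : Finset σ).powersetCard (m + 1), ∀ t ∈ S.powerset,
      homogeneousComponent (m + 1 + 4)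
          ((∏ j ∈ t, (X j : MvPolynomial σ R) ^ 5) * ∏ j ∈ S \ t, X j)
        = if t.card = 1 then (∏ j ∈ t, (X j : MvPolynomial σ R) ^ 5) * ∏ j ∈ S \ t, X j
          else 0 := by
    intro S hS t ht
    rw [Finset.mem_powersetCard] at hS
    rw [Finset.mem_powerset] at ht
    have hdeg : ((∏ j ∈ t, (X j : MvPolynomial σ R) ^ 5) * ∏ j ∈ S \ t, X j).IsHomogeneous
        (t.card * 5 + (S \ t).card) := by
      have ha := MvPolynomial.IsHomogeneous.prod t (fun j => (X j : MvPolynomial σ R) ^ 5)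
          (fun _ => 5) (fun j _ => (isHomogeneous_X _ _).pow 5)
      have hb := MvPolynomial.IsHomogeneous.prod (S \ t) (fun j => (X j : MvPolynomial σ R))
          (fun _ => 1) (fun j _ => isHomogeneous_X _ _)
      rw [Finset.sum_const, smul_eq_mul] at ha
      rw [Finset.sum_const, smul_eq_mul, mul_one] at hb
      exact ha.mul hb
    rw [homogeneousComponent_of_mem ((mem_homogeneousSubmodule _ _).mpr hdeg)]
    have hsd : (S \ t).card = S.card - t.card := Finset.card_sdiff_of_subset ht
    have htS : t.card ≤ m + 1 := hS.2 ▸ Finset.card_le_card ht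
    have hiff : (m + 1 + 4 = t.card * 5 + (S \ t).card) ↔ (t.card = 1) := by
      rw [hsd, hS.2]
      omega
    simp only [hiff]
  rw [Finset.sum_congr rfl fun S hS => Finset.sum_congr rfl (hcomp S hS)]
  have hfilter : ∀ S : Finset σ,
      (∑ t ∈ S.powerset, if t.card = 1 then
        (∏ j ∈ t, (X j : MvPolynomial σ R) ^ 5) * ∏ j ∈ S \ t, X j else 0)
      = ∑ i ∈ S, (X i : MvPolynomial σ R) ^ 5 * ∏ j ∈ S.erase i, X j := by
    intro S
    rw [← Finset.sum_filter, ← Finset.powersetCard_eq_filter]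
    rw [Finset.powersetCard_one, Finset.sum_map]
    refine Finset.sum_congr rfl fun i _ => ?_
    simp [Finset.erase_eq]
  rw [Finset.sum_congr rfl fun S _ => hfilter S]
  rw [pair_swap R m (fun i t => (X i : MvPolynomial σ R) ^ 5 * ∏ j ∈ t, X j)]
  unfold auxB auxE
  refine Finset.sum_congr rfl fun i _ => ?_
  rw [Finset.mul_sum]

end Aux

/-- Mod 5 Wu formula for 𝒫¹c_m (Proposition 5.1 iii)). -/
theorem stmt_6 (n : ℕ) (hn : 1 ≤ n) (m : ℕ) (hm1 : 1 ≤ m) (hmn : m ≤ n) :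
    let e : ℕ → MvPolynomial (Fin n) (ZMod 5) := esymm (Fin n) (ZMod 5)
    homogeneousComponent (m + 4)
      (aeval (fun i => X i + (X i) ^ 5) (e m)) =
    C ((m + 4 : ℕ) : ZMod 5) * e (m + 4)
      - e 1 * e (m + 3)
      + ((e 1) ^ 2 - 2 * e 2) * e (m + 2)
      + (-(e 1) ^ 3 - 2 * e 1 * e 2 + 2 * e 3) * e (m + 1)
      + ((e 1) ^ 4 + (e 1) ^ 2 * e 2 + 2 * (e 2) ^ 2 - e 1 * e 3 + e 4) * e m := by
  intro e
  obtain ⟨m', rfl⟩ : ∃ m', m = m' + 1 := ⟨m - 1, (Nat.succ_pred_eq_of_pos hm1).symm⟩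
  simp only [e]
  set R := ZMod 5
  set σ := Fin n
  have h5 : (5 : MvPolynomial σ R) = 0 := by
    have := CharP.cast_eq_zero (MvPolynomial σ R) 5
    exact_mod_cast this
  -- Newton identities for p1..p4
  have hq1 : psum σ R 1 = esymm σ R 1 := by
    have h1 : auxB (σ := σ) R 1 0 = psum σ R 1 := auxB_zero (σ := σ) R 1
    have h2 : auxB (σ := σ) R 1 0 = ((1 : ℕ) : MvPolynomial σ R) * esymm σ R 1 :=
      auxB_one (σ := σ) R 0
    push_cast at h2
    linear_combination h2 - h1
  have hq2 : psum σ R 2 = esymm σ R 1 ^ 2 - 2 * esymm σ R 2 := by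
    have h1 : auxB (σ := σ) R 1 1 = psum σ R 1 * esymm σ R 1 - auxB R 2 0 :=
      auxB_rec (σ := σ) R 1 0
    have h2 : auxB (σ := σ) R 1 1 = ((2 : ℕ) : MvPolynomial σ R) * esymm σ R 2 :=
      auxB_one (σ := σ) R 1
    have h3 : auxB (σ := σ) R 2 0 = psum σ R 2 := auxB_zero (σ := σ) R 2
    push_cast at h2
    linear_combination h1 - h2 - h3 + esymm σ R 1 * hq1
  have hq3 : psum σ R 3 = esymm σ R 1 ^ 3 + 2 * esymm σ R 1 * esymm σ R 2 - 2 * esymm σ R 3 := by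
    have h1 : auxB (σ := σ) R 1 2 = psum σ R 1 * esymm σ R 2 - auxB R 2 1 :=
      auxB_rec (σ := σ) R 1 1
    have h2 : auxB (σ := σ) R 2 1 = psum σ R 2 * esymm σ R 1 - auxB R 3 0 :=
      auxB_rec (σ := σ) R 2 0
    have h3 : auxB (σ := σ) R 1 2 = ((3 : ℕ) : MvPolynomial σ R) * esymm σ R 3 :=
      auxB_one (σ := σ) R 2
    have h4 : auxB (σ := σ) R 3 0 = psum σ R 3 := auxB_zero (σ := σ) R 3
    push_cast at h3
    linear_combination -h1 + h2 + h3 - h4 - esymm σ R 2 * hq1 + esymm σ R 1 * hq2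
      + (esymm σ R 3 - esymm σ R 1 * esymm σ R 2) * h5
  have hq4 : psum σ R 4 = esymm σ R 1 ^ 4 + esymm σ R 1 ^ 2 * esymm σ R 2
      + 2 * esymm σ R 2 ^ 2 - esymm σ R 1 * esymm σ R 3 + esymm σ R 4 := by
    have h1 : auxB (σ := σ) R 1 3 = psum σ R 1 * esymm σ R 3 - auxB R 2 2 :=
      auxB_rec (σ := σ) R 1 2
    have h2 : auxB (σ := σ) R 2 2 = psum σ R 2 * esymm σ R 2 - auxB R 3 1 :=
      auxB_rec (σ := σ) R 2 1
    have h3 : auxB (σ := σ) R 3 1 = psum σ R 3 * esymm σ R 1 - auxB R 4 0 :=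
      auxB_rec (σ := σ) R 3 0
    have h4 : auxB (σ := σ) R 1 3 = ((4 : ℕ) : MvPolynomial σ R) * esymm σ R 4 :=
      auxB_one (σ := σ) R 3
    have h5' : auxB (σ := σ) R 4 0 = psum σ R 4 := auxB_zero (σ := σ) R 4
    push_cast at h4
    linear_combination h1 - h2 + h3 - h4 - h5' + esymm σ R 3 * hq1 - esymm σ R 2 * hq2
      + esymm σ R 1 * hq3 - esymm σ R 4 * h5
  -- the telescoping chain
  have hr1 : auxB (σ := σ) R 1 (m' + 4) = psum σ R 1 * esymm σ R (m' + 4) - auxB R 2 (m' + 3) :=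
    auxB_rec (σ := σ) R 1 (m' + 3)
  have hr2 : auxB (σ := σ) R 2 (m' + 3) = psum σ R 2 * esymm σ R (m' + 3) - auxB R 3 (m' + 2) :=
    auxB_rec (σ := σ) R 2 (m' + 2)
  have hr3 : auxB (σ := σ) R 3 (m' + 2) = psum σ R 3 * esymm σ R (m' + 2) - auxB R 4 (m' + 1) :=
    auxB_rec (σ := σ) R 3 (m' + 1)
  have hr4 : auxB (σ := σ) R 4 (m' + 1) = psum σ R 4 * esymm σ R (m' + 1) - auxB R 5 m' :=
    auxB_rec (σ := σ) R 4 m'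
  have hA : auxB (σ := σ) R 1 (m' + 4)
      = ((m' + 5 : ℕ) : MvPolynomial σ R) * esymm σ R (m' + 5) :=
    auxB_one (σ := σ) R (m' + 4)
  have hC : C ((m' + 5 : ℕ) : ZMod 5) = ((m' + 5 : ℕ) : MvPolynomial σ R) :=
    map_natCast (C : ZMod 5 →+* MvPolynomial σ R) (m' + 5)
  show homogeneousComponent (m' + 1 + 4) (aeval (fun i => X i + (X i) ^ 5) (esymm σ R (m' + 1)))
    = C ((m' + 5 : ℕ) : ZMod 5) * esymm σ R (m' + 5)
      - esymm σ R 1 * esymm σ R (m' + 4)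
      + (esymm σ R 1 ^ 2 - 2 * esymm σ R 2) * esymm σ R (m' + 3)
      + (-esymm σ R 1 ^ 3 - 2 * esymm σ R 1 * esymm σ R 2 + 2 * esymm σ R 3) * esymm σ R (m' + 2)
      + (esymm σ R 1 ^ 4 + esymm σ R 1 ^ 2 * esymm σ R 2 + 2 * esymm σ R 2 ^ 2
          - esymm σ R 1 * esymm σ R 3 + esymm σ R 4) * esymm σ R (m' + 1)
  rw [homog_part (σ := σ) R m', hC]
  push_cast at hA ⊢
  linear_combination hr4 - hr3 + hr2 - hr1 + hA
    + esymm σ R (m' + 1) * hq4 - esymm σ R (m' + 2) * hq3 + esymm σ R (m' + 3) * hq2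
    - esymm σ R (m' + 4) * hq1
end

section
/- Let D be the unique 𝔽₃-derivation on 𝔽₃[ω₁,ω₂,ω₃,ω₄] with D(ωᵢ) = ωᵢ³ for i=1,…,4. Define c_k = e_k(t₁,…,t₆) where t₁=ω₄, t₂=ω₃−ω₄, t₃=ω₂−ω₃, t₄=ω₁−ω₂+ω₃, t₅=ω₁−ω₃+ω₄, t₆=ω₁−ω₄, and set θ₂ = ω₁²−c₂ and θ₄ = c₂²−c₄. Then D(θ₂) − θ₄ lies in the ideal generated by θ₂ in 𝔽₃[ω₁,…,ω₄]. -/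
open MvPolynomial

set_option maxHeartbeats 2000000 in
/-- For (F₄, 3): 𝒫¹θ₂ ≡ θ₄ mod ⟨θ₂⟩, the instance b_{2,4} = 1 of Lemma 2.2. -/
theorem stmt_10
    (D : Derivation (ZMod 3) (MvPolynomial (Fin 4) (ZMod 3))
        (MvPolynomial (Fin 4) (ZMod 3)))
    (hD : ∀ i : Fin 4, D (X i) = (X i) ^ 3) :
    let ω : Fin 4 → MvPolynomial (Fin 4) (ZMod 3) := X
    let t : Fin 6 → MvPolynomial (Fin 4) (ZMod 3) :=
      ![ω 3, ω 2 - ω 3, ω 1 - ω 2, ω 0 - ω 1 + ω 2, ω 0 - ω 2 + ω 3, ω 0 - ω 3]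
    let c : ℕ → MvPolynomial (Fin 4) (ZMod 3) :=
      fun k => aeval t (esymm (Fin 6) (ZMod 3) k)
    let θ₂ := (ω 0) ^ 2 - c 2
    let θ₄ := (c 2) ^ 2 - c 4
    D θ₂ - θ₄ ∈ Ideal.span {θ₂} := by
  intro ω t c θ₂ θ₄
  have ht0 : t 0 = X 3 := rfl
  have ht1 : t 1 = X 2 - X 3 := rfl
  have ht2 : t 2 = X 1 - X 2 := rfl
  have ht3 : t 3 = X 0 - X 1 + X 2 := rfl
  have ht4 : t 4 = X 0 - X 2 + X 3 := rfl
  have ht5 : t 5 = X 0 - X 3 := rfl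
  have h3 : (3 : MvPolynomial (Fin 4) (ZMod 3)) = 0 := by
    have := CharP.cast_eq_zero (MvPolynomial (Fin 4) (ZMod 3)) 3
    simpa using this
  have hc2 : c 2 = X 0*X 0 + X 0*X 0 + X 0*X 0 + X 0*X 1 - X 1*X 1 + X 1*X 2 + X 1*X 2 - X 2*X 2 - X 2*X 2 + X 2*X 3 + X 2*X 3 - X 3*X 3 - X 3*X 3 := by
    have hps : Finset.powersetCard 2 (Finset.univ : Finset (Fin 6)) =
        {{0,1},{0,2},{0,3},{0,4},{0,5},{1,2},{1,3},{1,4},{1,5},{2,3},{2,4},{2,5},{3,4},{3,5},{4,5}} := by decide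
    show aeval t (esymm (Fin 6) (ZMod 3) 2) = _
    rw [esymm, hps, map_sum]
    simp only [map_prod, aeval_X]
    simp (config := { decide := true }) only [Finset.sum_insert, Finset.prod_insert,
      Finset.sum_singleton, Finset.prod_singleton, Finset.mem_insert, Finset.mem_singleton]
    rw [ht0, ht1, ht2, ht3, ht4, ht5]
    ring
  have hc4 : c 4 = X 0*X 0*X 0*X 1 - X 0*X 0*X 1*X 1 + X 0*X 0*X 1*X 2 + X 0*X 0*X 1*X 2 + X 0*X 0*X 1*X 2 - X 0*X 0*X 2*X 2 - X 0*X 0*X 2*X 2 - X 0*X 0*X 2*X 2 + X 0*X 0*X 2*X 3 + X 0*X 0*X 2*X 3 + X 0*X 0*X 2*X 3 - X 0*X 0*X 3*X 3 - X 0*X 0*X 3*X 3 - X 0*X 0*X 3*X 3 - X 0*X 1*X 1*X 2 + X 0*X 1*X 2*X 2 + X 0*X 1*X 2*X 3 + X 0*X 1*X 2*X 3 - X 0*X 1*X 3*X 3 - X 0*X 1*X 3*X 3 - X 0*X 2*X 2*X 3 - X 0*X 2*X 2*X 3 - X 0*X 2*X 2*X 3 + X 0*X 2*X 3*X 3 +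 X 0*X 2*X 3*X 3 + X 0*X 2*X 3*X 3 + X 1*X 1*X 2*X 2 - X 1*X 1*X 2*X 3 - X 1*X 1*X 2*X 3 + X 1*X 1*X 3*X 3 + X 1*X 1*X 3*X 3 - X 1*X 2*X 2*X 2 - X 1*X 2*X 2*X 2 + X 1*X 2*X 2*X 3 + X 1*X 2*X 2*X 3 + X 1*X 2*X 2*X 3 + X 1*X 2*X 2*X 3 - X 1*X 2*X 3*X 3 - X 1*X 2*X 3*X 3 - X 1*X 2*X 3*X 3 - X 1*X 2*X 3*X 3 + X 2*X 2*X 2*X 2 - X 2*X 2*X 2*X 3 - X 2*X 2*X 2*X 3 + X 2*X 2*X 3*X 3 + X 2*X 2*X 3*X 3 + X 2*X 2*X 3*X 3 - X 2*X 3*X 3*X 3 - X 2*X 3*X 3*X 3 + X 3*X 3*X 3*X 3 := by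
    have hps : Finset.powersetCard 4 (Finset.univ : Finset (Fin 6)) =
        {{0,1,2,3},{0,1,2,4},{0,1,2,5},{0,1,3,4},{0,1,3,5},{0,1,4,5},{0,2,3,4},{0,2,3,5},{0,2,4,5},{0,3,4,5},{1,2,3,4},{1,2,3,5},{1,2,4,5},{1,3,4,5},{2,3,4,5}} := by decide
    show aeval t (esymm (Fin 6) (ZMod 3) 4) = _
    rw [esymm, hps, map_sum]
    simp only [map_prod, aeval_X]
    simp (config := { decide := true }) only [Finset.sum_insert, Finset.prod_insert,
      Finset.sum_singleton, Finset.prod_singleton, Finset.mem_insert, Finset.mem_singleton]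
    rw [ht0, ht1, ht2, ht3, ht4, ht5]
    ring
  rw [Ideal.mem_span_singleton]
  refine ⟨-(X 0^2) - X 0*X 1 + X 1^2 + X 1*X 2 - X 2^2 + X 2*X 3 - X 3^2, ?_⟩
  show D ((ω 0) ^ 2 - c 2) - ((c 2)^2 - c 4) = ((ω 0) ^ 2 - c 2) * _
  have hω : ω 0 = X 0 := rfl
  rw [hω, hc2, hc4]
  simp only [map_sub, map_add, Derivation.leibniz, Derivation.leibniz_pow, hD,
    smul_eq_mul, nsmul_eq_mul]
  push_cast
  linear_combination (- 5*X 0^4 - 3*(X 0^3*X 1) + 2*(X 0^2*X 1^2) - 3*(X 0^2*X 1*X 2) + 3*(X 0^2*X 2^2) - 3*(X 0^2*X 2*X 3) + 3*(X 0^2*X 3^2) + X 0*X 1^3 - 2*(X 0*X 1^2*X 2) + 2*(X 0*X 1*X 2^2) - X 0*X 1*X 2*X 3 + X 0*X 1*X 3^2 - X 0*X 2^2*X 3 + X 0*X 2*X 3^2 + X 1^3*X 2 - 2*(X 1^2*X 2^2) + X 1^2*X 2*X 3 - X 1^2*X 3^2 + X 2^4 - X 2^2*X 3^2 + X 3^4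 : MvPolynomial (Fin 4) (ZMod 3)) * h3
end
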